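/- Let H be a connected m-uniform linear hypergraph (m ≥ 3), let e be a non-pendant edge of H, and let u ∈ e. Let e_1,...,e_s be all edges of H adjacent to e, with e ∩ e_i = {v_i} for each i, and let H^r(e;u) be the hypergraph obtained from H by replacing each e_i by (e_i \ {v_i}) ∪ {u} (edge releasing on e at u); assume H^r(e;u) is again a simple m-uniform linear hypergraph. Then λ1(H^r(e;u)) > λ1(H). -/

import Mathlib

set_option linter.unusedSectionVars false
set_option linter.unusedVariables false
set_option maxHeartbeats 1000000


noncomputable section

open scoped Classical

/-- A finite hypergraph: a bundled finite vertex type together with a finite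
set of edges, each edge being a finite set of vertices. -/
structure HG where
  V : Type
  fin : Fintype V
  dec : DecidableEq V
  E : Finset (Finset V)

attribute [instance] HG.fin HG.dec

namespace HG

/-- Adjacency matrix of an `m`-uniform hypergraph: entry `1/(m-1)` if the two
vertices are distinct and lie in a common edge, `0` otherwise. -/
def adjMatrix (m : ℕ) (H : HG) : Matrix H.V H.V ℝ := fun i j =>
  if i ≠ j ∧ ∃ e ∈ H.E, i ∈ e ∧ j ∈ e then ((m : ℝ) - 1)⁻¹ else 0

/-- The spectral radius `λ₁(H)`: the largest (real) eigenvalue of the adjacency matrix. -/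
def lam1 (m : ℕ) (H : HG) : ℝ :=
  sSup {t : ℝ | ∃ x : H.V → ℝ, x ≠ 0 ∧ (H.adjMatrix m).mulVec x = t • x}

/-- `H` is `m`-uniform: every edge has exactly `m` vertices. -/
def Uniform (H : HG) (m : ℕ) : Prop := ∀ e ∈ H.E, e.card = m

/-- `H` is linear: two distinct edges meet in at most one vertex. -/
def Linear (H : HG) : Prop := ∀ e ∈ H.E, ∀ f ∈ H.E, e ≠ f → (e ∩ f).card ≤ 1

/-- The underlying (adjacency) simple graph of a hypergraph. -/
def toGraph (H : HG) : SimpleGraph H.V where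
  Adj i j := i ≠ j ∧ ∃ e ∈ H.E, i ∈ e ∧ j ∈ e
  symm := by refine ⟨?_⟩; rintro i j ⟨hne, e, he, hi, hj⟩; exact ⟨hne.symm, e, he, hj, hi⟩
  loopless := by refine ⟨?_⟩; rintro i ⟨hne, -⟩; exact hne rfl

/-- Connectedness of a hypergraph. -/
def Connected (H : HG) : Prop := H.toGraph.Connected

/-- Diameter: maximum distance between two vertices. -/
def diam (H : HG) : ℕ :=
  Finset.univ.sup fun u => Finset.univ.sup fun v => H.toGraph.dist u v

/-- Degree of a vertex: the number of edges containing it. -/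
def degree (H : HG) (v : H.V) : ℕ := (H.E.filter fun e => v ∈ e).card

/-- A vertex is pendant if it lies in exactly one edge. -/
def PendantVertex (H : HG) (v : H.V) : Prop := H.degree v = 1

/-- An edge is pendant if it contains exactly one non-pendant vertex. -/
def PendantEdge (H : HG) (e : Finset H.V) : Prop :=
  e ∈ H.E ∧ (e.filter fun v => ¬ H.PendantVertex v).card = 1

/-- A supertree: connected `m`-uniform linear hypergraph with `n - 1 = k (m-1)`. -/
def IsSupertree (m : ℕ) (H : HG) : Prop :=
  H.Uniform m ∧ H.Linear ∧ H.Connected ∧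
    Fintype.card H.V = H.E.card * (m - 1) + 1

/-- A hypertree: a supertree each of whose edges has at most two non-pendant vertices. -/
def IsHypertree (m : ℕ) (H : HG) : Prop :=
  H.IsSupertree m ∧ ∀ e ∈ H.E, (e.filter fun v => ¬ H.PendantVertex v).card ≤ 2

/-- Isomorphism of hypergraphs. -/
def Iso (H K : HG) : Prop :=
  ∃ f : H.V ≃ K.V, ∀ e : Finset H.V, e ∈ H.E ↔ e.image f ∈ K.E

/-- `X` is a Perron eigenvector of `H`: positive and an eigenvector for `λ₁`. -/
def IsPerron (m : ℕ) (H : HG) (X : H.V → ℝ) : Prop :=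
  (∀ v, 0 < X v) ∧ (H.adjMatrix m).mulVec X = lam1 m H • X

/-- Cyclic successor on `Fin l`. -/
def cycNext (l : ℕ) (j : Fin l) : Fin l :=
  ⟨(j.val + 1) % l, Nat.mod_lt _ (lt_of_le_of_lt (Nat.zero_le _) j.isLt)⟩

/-- `e : Fin l → Finset H.V` is a loose cycle of length `l` in `H`:
consecutive edges meet in exactly one vertex, non-consecutive edges are disjoint. -/
def IsLooseCycle (H : HG) (l : ℕ) (e : Fin l → Finset H.V) : Prop :=
  3 ≤ l ∧ (∀ i, e i ∈ H.E) ∧ Function.Injective e ∧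
    ∀ i j : Fin l, i ≠ j →
      ((j = cycNext l i ∨ i = cycNext l j) → (e i ∩ e j).card = 1) ∧
      (¬(j = cycNext l i ∨ i = cycNext l j) → e i ∩ e j = ∅)

/-- The collection of (edge sets of) loose cycles contained in `H`. -/
def cycleSets (H : HG) : Set (Finset (Finset H.V)) :=
  {C | ∃ (l : ℕ) (e : Fin l → Finset H.V), H.IsLooseCycle l e ∧ C = Finset.univ.image e}

/-- The `m`-th power hypergraph of the graph with vertex type `Vg` and edges
`{a i, b i}` for `i : Eg`: each edge is enlarged with `m - 2` new vertices. -/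
def powerHG (m : ℕ) (Vg Eg : Type) [Fintype Vg] [DecidableEq Vg] [Fintype Eg] [DecidableEq Eg]
    (a b : Eg → Vg) : HG where
  V := Vg ⊕ Eg × Fin (m - 2)
  fin := inferInstance
  dec := inferInstance
  E := Finset.univ.image fun i : Eg =>
    ({Sum.inl (a i), Sum.inl (b i)} : Finset (Vg ⊕ Eg × Fin (m - 2))) ∪
      Finset.univ.image fun t : Fin (m - 2) => Sum.inr (i, t)

/-- `H` is (isomorphic to) the `m`-th power hypergraph of some simple graph. -/
def IsPowerHG (m : ℕ) (H : HG) : Prop :=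
  ∃ (N k : ℕ) (a b : Fin k → Fin N),
    (∀ i, a i ≠ b i) ∧
    (Function.Injective fun i => ({a i, b i} : Finset (Fin N))) ∧
    H.Iso (powerHG m (Fin N) (Fin k) a b)

/-- The `m`-uniform loose path of length `l`. -/
def loosePath (m l : ℕ) : HG :=
  powerHG m (Fin (l + 1)) (Fin l) (fun j => j.castSucc) (fun j => j.succ)

/-- The `m`-uniform hyperstar with `k` edges. -/
def hyperstar (m k : ℕ) : HG :=
  powerHG m (Fin (k + 1)) (Fin k) (fun _ => 0) (fun i => i.succ)

/-- `T_d(c₂,…,c_d)`: the hypertree obtained from the loose path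
`v₁ e₁ v₂ … v_d e_d v_{d+1}` by attaching `c i` pendant edges at `v_i`
(the path vertex of 0-based index `j` is `v_{j+1}`). -/
def Td (m d : ℕ) (c : ℕ → ℕ) : HG :=
  powerHG m
    (Fin (d + 1) ⊕ Σ j : Fin (d + 1), Fin (c (j.val + 1)))
    (Fin d ⊕ Σ j : Fin (d + 1), Fin (c (j.val + 1)))
    (Sum.elim (fun j => Sum.inl j.castSucc) fun x => Sum.inl x.1)
    (Sum.elim (fun j => Sum.inl j.succ) fun x => Sum.inr x)

/-- `UC_l(c₁,…,c_l)`: the unicyclic hypergraph obtained from the loose cycle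
`v₁ e₁ v₂ … v_l e_l v₁` by attaching `c i` pendant edges at `v_i`
(the cycle vertex of 0-based index `j` is `v_{j+1}`). -/
def UCl (m l : ℕ) (c : ℕ → ℕ) : HG :=
  powerHG m
    (Fin l ⊕ Σ j : Fin l, Fin (c (j.val + 1)))
    (Fin l ⊕ Σ j : Fin l, Fin (c (j.val + 1)))
    (Sum.elim (fun j => Sum.inl j) fun x => Sum.inl x.1)
    (Sum.elim (fun j => Sum.inl (cycNext l j)) fun x => Sum.inr x)

/-- `U_lC(c₁ = a)`: obtained from `UC_l(c₁ = a)` by attaching one further pendant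
edge at a pendant vertex of one of its `a` pendant edges. -/
def UlC (m l a : ℕ) : HG :=
  match l, a with
  | l' + 1, a' + 1 =>
    powerHG m (Fin (l' + 1) ⊕ Fin (a' + 1) ⊕ Unit) (Fin (l' + 1) ⊕ Fin (a' + 1) ⊕ Unit)
      (Sum.elim (fun j => Sum.inl j)
        (Sum.elim (fun _ => Sum.inl 0) fun _ => Sum.inr (Sum.inl 0)))
      (Sum.elim (fun j => Sum.inl (cycNext (l' + 1) j))
        (Sum.elim (fun t => Sum.inr (Sum.inl t)) fun _ => Sum.inr (Sum.inr ())))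
  | _, _ => ⟨PUnit, inferInstance, inferInstance, ∅⟩

/-- `BC(l₁)`: two loose 3-cycles glued at one common core vertex, with `l₁`
pendant edges attached at the identified core vertex. -/
def BC (m l1 : ℕ) : HG :=
  powerHG m (Unit ⊕ Fin 4 ⊕ Fin l1) (Fin 6 ⊕ Fin l1)
    (Sum.elim
      ![Sum.inl (), Sum.inr (Sum.inl 0), Sum.inr (Sum.inl 1),
        Sum.inl (), Sum.inr (Sum.inl 2), Sum.inr (Sum.inl 3)]
      fun _ => Sum.inl ())
    (Sum.elim
      ![Sum.inr (Sum.inl 0), Sum.inr (Sum.inl 1), Sum.inl (),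
        Sum.inr (Sum.inl 2), Sum.inr (Sum.inl 3), Sum.inl ()]
      fun t => Sum.inr (Sum.inr t))

/-- `B₂C(l₁,l₂)`: obtained from `BC(l₁)` by attaching `l₂` pendant edges at a
core vertex of degree 2 of one of its 3-cycles. -/
def B2C (m l1 l2 : ℕ) : HG :=
  powerHG m (Unit ⊕ Fin 4 ⊕ Fin l1 ⊕ Fin l2) (Fin 6 ⊕ Fin l1 ⊕ Fin l2)
    (Sum.elim
      ![Sum.inl (), Sum.inr (Sum.inl 0), Sum.inr (Sum.inl 1),
        Sum.inl (), Sum.inr (Sum.inl 2), Sum.inr (Sum.inl 3)]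
      (Sum.elim (fun _ => Sum.inl ()) fun _ => Sum.inr (Sum.inl 0)))
    (Sum.elim
      ![Sum.inr (Sum.inl 0), Sum.inr (Sum.inl 1), Sum.inl (),
        Sum.inr (Sum.inl 2), Sum.inr (Sum.inl 3), Sum.inl ()]
      (Sum.elim (fun t => Sum.inr (Sum.inr (Sum.inl t)))
        fun t => Sum.inr (Sum.inr (Sum.inr t))))

/-- `T₁C(l₁,l₂,l₃,l₄)`: the tricyclic Type I hypergraph built on the theta graph
with cycles `v₁e₁v₂e₂v₃e₃v₁`, `v₁e₃v₃e₄v₄e₅v₁`, `v₁e₁v₂e₂v₃e₄v₄e₅v₁`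
(here 0-based: `v₁ = 0, v₂ = 1, v₃ = 2, v₄ = 3`), together with `lᵢ` pendant
edges at `vᵢ`. -/
def T1C (m l1 l2 l3 l4 : ℕ) : HG :=
  powerHG m
    (Fin 4 ⊕ (Fin l1 ⊕ Fin l2 ⊕ Fin l3 ⊕ Fin l4))
    (Fin 5 ⊕ (Fin l1 ⊕ Fin l2 ⊕ Fin l3 ⊕ Fin l4))
    (Sum.elim
      ![Sum.inl 0, Sum.inl 1, Sum.inl 2, Sum.inl 2, Sum.inl 3]
      (Sum.elim (fun _ => Sum.inl 0)
        (Sum.elim (fun _ => Sum.inl 1)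
          (Sum.elim (fun _ => Sum.inl 2) fun _ => Sum.inl 3))))
    (Sum.elim
      ![Sum.inl 1, Sum.inl 2, Sum.inl 0, Sum.inl 3, Sum.inl 0]
      (Sum.elim (fun t => Sum.inr (Sum.inl t))
        (Sum.elim (fun t => Sum.inr (Sum.inr (Sum.inl t)))
          (Sum.elim (fun t => Sum.inr (Sum.inr (Sum.inr (Sum.inl t))))
            fun t => Sum.inr (Sum.inr (Sum.inr (Sum.inr t)))))))

end HG

section AuxSpec
open Matrix




variable {n : Type} [Fintype n] [DecidableEq n] [Nonempty n]

namespace SpecAux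
variable {A : Matrix n n ℝ} (hA : A.IsHermitian)

def toE (x : n → ℝ) : EuclideanSpace ℝ n := (WithLp.equiv 2 (n → ℝ)).symm x

lemma inner_toE (x y : n → ℝ) : (inner ℝ (toE x) (toE y) : ℝ) = x ⬝ᵥ y := by
  simp [toE, PiLp.inner_apply, dotProduct, mul_comm]

lemma symm_dot (hA : A.IsHermitian) (x y : n → ℝ) : (A.mulVec x) ⬝ᵥ y = x ⬝ᵥ (A.mulVec y) := by
  have ht : Aᵀ = A := by
    rw [← Matrix.conjTranspose_eq_transpose_of_trivial]; exact hA
  rw [dotProduct_mulVec, ← Matrix.mulVec_transpose, ht]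

def rp (x : n → ℝ) : n → ℝ := hA.eigenvectorBasis.repr (toE x)

lemma repr_mulVec (x : n → ℝ) (i : n) :
    rp hA (A.mulVec x) i = hA.eigenvalues i * rp hA x i := by
  rw [rp, rp, OrthonormalBasis.repr_apply_apply, OrthonormalBasis.repr_apply_apply]
  set v : n → ℝ := (WithLp.equiv 2 (n → ℝ)) (hA.eigenvectorBasis i) with hv
  have h0 : toE v = hA.eigenvectorBasis i := rfl
  rw [← h0, inner_toE, inner_toE, ← symm_dot hA v x]
  have h1 : A.mulVec v = hA.eigenvalues i • v := hA.mulVec_eigenvectorBasis i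
  rw [h1, smul_dotProduct, smul_eq_mul]

lemma dot_eq_sum (x y : n → ℝ) : x ⬝ᵥ y = ∑ i, rp hA x i * rp hA y i := by
  have h := hA.eigenvectorBasis.repr.inner_map_map (toE x) (toE y)
  rw [inner_toE] at h
  rw [← h, PiLp.inner_apply]
  exact Finset.sum_congr rfl fun i _ => by simp [rp, mul_comm]

lemma quad_eq_sum (x : n → ℝ) :
    x ⬝ᵥ (A.mulVec x) = ∑ i, hA.eigenvalues i * (rp hA x i)^2 := by
  rw [dot_eq_sum hA]
  exact Finset.sum_congr rfl fun i _ => by rw [repr_mulVec hA]; ring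

def maxEig : ℝ := Finset.univ.sup' Finset.univ_nonempty hA.eigenvalues

lemma eig_le_max (i : n) : hA.eigenvalues i ≤ maxEig hA :=
  Finset.le_sup' _ (Finset.mem_univ i)

lemma dot_self_nonneg (x : n → ℝ) : 0 ≤ x ⬝ᵥ x :=
  Finset.sum_nonneg fun i _ => mul_self_nonneg _

lemma dot_self_pos {x : n → ℝ} (hx : x ≠ 0) : 0 < x ⬝ᵥ x := by
  rcases (dot_self_nonneg x).lt_or_eq with h | h
  · exact h
  · exfalso; apply hx; funext i
    have h2 := (Finset.sum_eq_zero_iff_of_nonneg (fun i _ => mul_self_nonneg (x i))).1 h.symm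
      i (Finset.mem_univ i)
    simpa using mul_self_eq_zero.1 h2

lemma quad_le_max (x : n → ℝ) : x ⬝ᵥ (A.mulVec x) ≤ maxEig hA * (x ⬝ᵥ x) := by
  rw [quad_eq_sum hA, dot_eq_sum hA x x, Finset.mul_sum]
  apply Finset.sum_le_sum
  intro i _
  have h2 : rp hA x i * rp hA x i = (rp hA x i)^2 := by ring
  rw [h2]
  exact mul_le_mul_of_nonneg_right (eig_le_max hA i) (sq_nonneg _)

lemma toE_injective : Function.Injective (toE (n := n)) := fun a b h => (WithLp.equiv 2 (n → ℝ)).symm.injective h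

lemma eq_smul_of_quad_eq {x : n → ℝ} (hq : x ⬝ᵥ (A.mulVec x) = maxEig hA * (x ⬝ᵥ x)) :
    A.mulVec x = maxEig hA • x := by
  have key : ∀ i, hA.eigenvalues i * rp hA x i = maxEig hA * rp hA x i := by
    have h0 : ∑ i, (maxEig hA - hA.eigenvalues i) * (rp hA x i)^2 = 0 := by
      have hq2 := hq
      have h1 : x ⬝ᵥ x = ∑ i, (rp hA x i)^2 := by
        rw [dot_eq_sum hA x x]; exact Finset.sum_congr rfl fun i _ => (sq _).symm
      rw [quad_eq_sum hA, h1, Finset.mul_sum] at hq2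
      rw [Finset.sum_congr rfl (fun i _ => sub_mul (maxEig hA) (hA.eigenvalues i) ((rp hA x i)^2)),
        Finset.sum_sub_distrib, hq2, sub_self]
    intro i
    have h3 := (Finset.sum_eq_zero_iff_of_nonneg (fun i _ =>
      mul_nonneg (sub_nonneg.2 (eig_le_max hA i)) (sq_nonneg (rp hA x i)))).1 h0 i (Finset.mem_univ i)
    rcases mul_eq_zero.1 h3 with h | h
    · rw [sub_eq_zero] at h; rw [← h]
    · rw [pow_eq_zero_iff (by norm_num)] at h; rw [h, mul_zero, mul_zero]
  apply toE_injective
  apply hA.eigenvectorBasis.repr.injective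
  ext i
  have hl : hA.eigenvectorBasis.repr (toE (A.mulVec x)) i = hA.eigenvalues i * rp hA x i :=
    repr_mulVec hA x i
  rw [hl, key i]
  have h4 : toE (maxEig hA • x) = maxEig hA • toE x := rfl
  rw [h4, LinearIsometryEquiv.map_smul]
  simp [rp]

lemma exists_eigvec_max : ∃ x : n → ℝ, x ≠ 0 ∧ A.mulVec x = maxEig hA • x := by
  obtain ⟨i0, -, hi0⟩ := Finset.exists_mem_eq_sup' (Finset.univ_nonempty (α := n)) hA.eigenvalues
  refine ⟨(WithLp.equiv 2 (n → ℝ)) (hA.eigenvectorBasis i0), ?_, ?_⟩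
  · intro h
    have hb : hA.eigenvectorBasis i0 = (0 : EuclideanSpace ℝ n) := congrArg toE h
    have hnorm := hA.eigenvectorBasis.orthonormal.1 i0
    rw [hb] at hnorm
    simp at hnorm
  · have := hA.mulVec_eigenvectorBasis i0
    rw [WithLp.equiv_apply, this]
    have : maxEig hA = hA.eigenvalues i0 := hi0
    rw [this]

lemma sSup_eq_maxEig :
    sSup {t : ℝ | ∃ x : n → ℝ, x ≠ 0 ∧ A.mulVec x = t • x} = maxEig hA := by
  have hmem : maxEig hA ∈ {t : ℝ | ∃ x : n → ℝ, x ≠ 0 ∧ A.mulVec x = t • x} :=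
    exists_eigvec_max hA
  have hub : ∀ t ∈ {t : ℝ | ∃ x : n → ℝ, x ≠ 0 ∧ A.mulVec x = t • x}, t ≤ maxEig hA := by
    rintro t ⟨x, hx, hxe⟩
    have h1 : x ⬝ᵥ (A.mulVec x) = t * (x ⬝ᵥ x) := by
      rw [hxe, dotProduct_smul, smul_eq_mul]
    have h2 := quad_le_max hA x
    rw [h1] at h2
    exact le_of_mul_le_mul_right h2 (dot_self_pos hx)
  exact le_antisymm (csSup_le ⟨_, hmem⟩ hub) (le_csSup ⟨_, hub⟩ hmem)

end SpecAux

namespace QF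
variable {V : Type} [Fintype V] [DecidableEq V]

/-- generic quadratic form identity -/
lemma quad_form (E : Finset (Finset V)) (c : ℝ)
    (hlin : ∀ e ∈ E, ∀ f ∈ E, e ≠ f → (e ∩ f).card ≤ 1)
    (A : Matrix V V ℝ)
    (hA : ∀ i j, A i j = if i ≠ j ∧ ∃ g ∈ E, i ∈ g ∧ j ∈ g then c else 0)
    (x : V → ℝ) :
    x ⬝ᵥ (A.mulVec x)
      = c * ∑ g ∈ E, ((∑ i ∈ g, x i)^2 - ∑ i ∈ g, (x i)^2) := by
  classical
  set F : V → V → ℝ := fun i j => if i = j then 0 else x i * x j with hF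
  set N : V → V → ℝ := fun i j => ((E.filter fun g => i ∈ g ∧ j ∈ g).card : ℝ) with hNdef
  have hN1 : ∀ i j : V, i ≠ j → (∃ g ∈ E, i ∈ g ∧ j ∈ g) →
      (E.filter fun g => i ∈ g ∧ j ∈ g).card = 1 := by
    intro i j hij hex
    obtain ⟨g, hg, hig, hjg⟩ := hex
    have hle : (E.filter fun g => i ∈ g ∧ j ∈ g).card ≤ 1 := by
      rw [Finset.card_le_one]
      intro a ha b hb
      simp only [Finset.mem_filter] at ha hb
      by_contra hab
      have h2 : ({i, j} : Finset V) ⊆ a ∩ b := by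
        intro t ht
        simp only [Finset.mem_insert, Finset.mem_singleton] at ht
        rcases ht with rfl | rfl <;>
          simp [Finset.mem_inter, ha.2.1, hb.2.1, ha.2.2, hb.2.2]
      have h3 := Finset.card_le_card h2
      rw [Finset.card_insert_of_notMem (by simpa using hij), Finset.card_singleton] at h3
      have h4 := hlin a ha.1 b hb.1 hab
      omega
    have hge : 0 < (E.filter fun g => i ∈ g ∧ j ∈ g).card :=
      Finset.card_pos.2 ⟨g, Finset.mem_filter.2 ⟨hg, hig, hjg⟩⟩
    omega
  have step1 : x ⬝ᵥ (A.mulVec x) = ∑ i, ∑ j, c * (F i j * N i j) := by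
    rw [dotProduct, Finset.sum_congr rfl (fun i _ => ?_)]
    rw [Matrix.mulVec, dotProduct, Finset.mul_sum]
    refine Finset.sum_congr rfl fun j _ => ?_
    rw [hA i j]
    by_cases hij : i = j
    · subst hij; simp [F]
    · by_cases hex : ∃ g ∈ E, i ∈ g ∧ j ∈ g
      · rw [if_pos ⟨hij, hex⟩]
        have : N i j = 1 := by rw [hNdef]; norm_num [hN1 i j hij hex]
        rw [this]
        simp [F, hij]; ring
      · rw [if_neg (fun h => hex h.2)]
        have : N i j = 0 := by
          rw [hNdef]
          norm_num [Finset.filter_eq_empty_iff.2 (fun g hg hmem => hex ⟨g, hg, hmem⟩)]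
        rw [this]; ring
  have hφ : ∀ g : Finset V, (∑ i ∈ g, x i)^2 - ∑ i ∈ g, (x i)^2
      = ∑ i ∈ g, ∑ j ∈ g, F i j := by
    intro g
    rw [sq, Finset.sum_mul_sum, ← Finset.sum_sub_distrib]
    refine Finset.sum_congr rfl fun i hi => ?_
    have h1 : ∀ j ∈ g, F i j = x i * x j - (if j = i then x i * x j else 0) := by
      intro j hj
      by_cases h : j = i
      · subst h; simp [F]
      · have hFij : F i j = x i * x j := if_neg (fun h' : i = j => h h'.symm)
        rw [hFij, if_neg h, sub_zero]
    rw [Finset.sum_congr rfl h1, Finset.sum_sub_distrib, Finset.sum_ite_eq' g i, if_pos hi, sq]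
  have step2 : ∑ g ∈ E, ((∑ i ∈ g, x i)^2 - ∑ i ∈ g, (x i)^2)
      = ∑ i, ∑ j, F i j * N i j := by
    rw [Finset.sum_congr rfl fun g _ => hφ g]
    have e1 : ∀ (g : Finset V) (f : V → ℝ), ∑ i ∈ g, f i
        = ∑ i : V, if i ∈ g then f i else 0 := by
      intro g f
      rw [Finset.sum_ite_mem, Finset.univ_inter]
    have h2 : ∀ g : Finset V, ∑ i ∈ g, ∑ j ∈ g, F i j
        = ∑ i : V, ∑ j : V, (if i ∈ g ∧ j ∈ g then F i j else 0) := by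
      intro g
      rw [e1 g]
      refine Finset.sum_congr rfl fun i _ => ?_
      by_cases hig : i ∈ g
      · rw [if_pos hig, e1 g]
        refine Finset.sum_congr rfl fun j _ => ?_
        by_cases hjg : j ∈ g <;> simp [hig, hjg]
      · rw [if_neg hig]
        simp [hig]
    rw [Finset.sum_congr rfl fun g _ => h2 g, Finset.sum_comm]
    refine Finset.sum_congr rfl fun i _ => ?_
    rw [Finset.sum_comm]
    refine Finset.sum_congr rfl fun j _ => ?_
    have h3 : ∀ g ∈ E, (if i ∈ g ∧ j ∈ g then F i j else 0)
        = F i j * (if i ∈ g ∧ j ∈ g then 1 else 0) := by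
      intro g _; by_cases h : i ∈ g ∧ j ∈ g <;> simp [h]
    rw [Finset.sum_congr rfl h3, ← Finset.mul_sum, Finset.sum_boole, hNdef]
  rw [step1, step2, Finset.mul_sum]
  exact Finset.sum_congr rfl fun i _ => by rw [Finset.mul_sum]
end QF

end AuxSpec

namespace HGaux
open Matrix

lemma adj_isHermitian (m : ℕ) (H : HG) : (H.adjMatrix m).IsHermitian := by
  show (H.adjMatrix m)ᴴ = H.adjMatrix m
  ext i j
  simp only [Matrix.conjTranspose_apply, star_trivial]
  show (if j ≠ i ∧ ∃ g ∈ H.E, j ∈ g ∧ i ∈ g then ((m:ℝ)-1)⁻¹ else 0)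
      = (if i ≠ j ∧ ∃ g ∈ H.E, i ∈ g ∧ j ∈ g then ((m:ℝ)-1)⁻¹ else 0)
  refine if_congr ?_ rfl rfl
  constructor <;> rintro ⟨h1, g, h2, h3, h4⟩ <;> exact ⟨h1.symm, g, h2, h4, h3⟩

lemma adj_nonneg (m : ℕ) (hm : 3 ≤ m) (H : HG) (i j : H.V) : 0 ≤ H.adjMatrix m i j := by
  have h3 : (3:ℝ) ≤ (m:ℝ) := by exact_mod_cast hm
  have hm1 : (0:ℝ) ≤ ((m:ℝ)-1)⁻¹ := by
    have h0 : (0:ℝ) < (m:ℝ)-1 := by linarith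
    positivity
  show (0:ℝ) ≤ (if i ≠ j ∧ ∃ g ∈ H.E, i ∈ g ∧ j ∈ g then ((m:ℝ)-1)⁻¹ else 0)
  split
  · exact hm1
  · exact le_refl 0

lemma exists_perron_aux (m : ℕ) (hm : 3 ≤ m) (H : HG) [Nonempty H.V] (hconn : H.Connected) :
    ∃ X : H.V → ℝ, (∀ v, 0 < X v) ∧
      (H.adjMatrix m).mulVec X = SpecAux.maxEig (adj_isHermitian m H) • X := by
  classical
  set A := H.adjMatrix m with hA
  set μ := SpecAux.maxEig (adj_isHermitian m H) with hμ
  have hnn : ∀ i j, 0 ≤ A i j := adj_nonneg m hm H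
  obtain ⟨x, hx0, hxeig⟩ := SpecAux.exists_eigvec_max (adj_isHermitian m H)
  set y : H.V → ℝ := fun i => |x i| with hy
  have hy0 : y ≠ 0 := by
    intro h; apply hx0; funext i
    have h2 := congrFun h i
    simpa [hy, abs_eq_zero] using h2
  have hynn : ∀ i, 0 ≤ y i := fun i => abs_nonneg _
  have hyy : y ⬝ᵥ y = x ⬝ᵥ x := by
    simp [dotProduct, hy, abs_mul_abs_self]
  have hq : x ⬝ᵥ A.mulVec x = μ * (x ⬝ᵥ x) := by
    rw [hxeig, dotProduct_smul, smul_eq_mul]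
  have hterm : ∀ (z : H.V → ℝ), z ⬝ᵥ A.mulVec z = ∑ i, ∑ j, z i * (A i j * z j) := by
    intro z
    rw [dotProduct]
    refine Finset.sum_congr rfl fun i _ => ?_
    rw [Matrix.mulVec, dotProduct, Finset.mul_sum]
  have hle : x ⬝ᵥ A.mulVec x ≤ y ⬝ᵥ A.mulVec y := by
    rw [hterm, hterm]
    refine Finset.sum_le_sum fun i _ => ?_
    refine Finset.sum_le_sum fun j _ => ?_
    calc x i * (A i j * x j) ≤ |x i * (A i j * x j)| := le_abs_self _
      _ = y i * (A i j * y j) := by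
          rw [abs_mul, abs_mul, abs_of_nonneg (hnn i j)]
  have hup := SpecAux.quad_le_max (adj_isHermitian m H) y
  have hyq : y ⬝ᵥ A.mulVec y = μ * (y ⬝ᵥ y) := le_antisymm hup (by rw [hyy, ← hq]; exact hle)
  have hyeig : A.mulVec y = μ • y := SpecAux.eq_smul_of_quad_eq (adj_isHermitian m H) hyq
  have hzero : ∀ v w : H.V, H.toGraph.Adj v w → y v = 0 → y w = 0 := by
    intro v w hadj hv
    have h1 : ∑ j, A v j * y j = 0 := by
      have h2 := congrFun hyeig v
      rw [Pi.smul_apply, smul_eq_mul, hv, mul_zero] at h2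
      rw [← h2]; rfl
    have h3 := (Finset.sum_eq_zero_iff_of_nonneg
      (fun j _ => mul_nonneg (hnn v j) (hynn j))).1 h1 w (Finset.mem_univ w)
    have h4 : A v w = ((m:ℝ)-1)⁻¹ := by
      show (if v ≠ w ∧ ∃ g ∈ H.E, v ∈ g ∧ w ∈ g then ((m:ℝ)-1)⁻¹ else 0) = _
      rw [if_pos ⟨hadj.1, hadj.2⟩]
    have hm1 : ((m:ℝ)-1)⁻¹ ≠ 0 := by
      have h5 : (3:ℝ) ≤ (m:ℝ) := by exact_mod_cast hm
      have h6 : (m:ℝ) - 1 ≠ 0 := by linarith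
      exact inv_ne_zero h6
    rw [h4] at h3
    rcases mul_eq_zero.1 h3 with h | h
    · exact absurd h hm1
    · exact h
  have hwalk : ∀ (v w : H.V) (p : H.toGraph.Walk v w), y v = 0 → y w = 0 := by
    intro v w p
    induction p with
    | nil => exact id
    | cons h p ih => exact fun h0 => ih (hzero _ _ h h0)
  obtain ⟨w0, hw0⟩ := Function.ne_iff.1 hy0
  refine ⟨y, fun v => ?_, hyeig⟩
  rcases (hynn v).lt_or_eq with h | h
  · exact h
  · exfalso
    obtain ⟨p⟩ := (show H.toGraph.Connected from hconn).preconnected v w0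
    exact hw0 (by simpa using hwalk v w0 p h.symm)

end HGaux
open Matrix


open HG in
/-- **Edge releasing increases the spectral radius.**
Let `H` be a connected `m`-uniform linear hypergraph (`m ≥ 3`), `e` a
non-pendant edge of `H` and `u ∈ e`.  The edges adjacent to `e` are exactly
the `f ∈ H.E` with `f ≠ e` and `f ∩ e ≠ ∅` (by linearity each such meets `e`
in a single vertex `v_i`, so `(f \ {v_i}) ∪ {u} = (f \ e) ∪ {u}`).  If the
hypergraph `H^r(e;u)` obtained by replacing every adjacent edge `f` by
`(f \ e) ∪ {u}` is again a simple `m`-uniform linear hypergraph, then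
`λ₁(H^r(e;u)) > λ₁(H)`. -/
theorem edge_releasing_increases_spectral_radius
    (m : ℕ) (hm : 3 ≤ m)
    (H : HG) (hunif : H.Uniform m) (hlin : H.Linear) (hconn : H.Connected)
    (e : Finset H.V) (he : e ∈ H.E)
    (hnonpend : 2 ≤ (e.filter fun v => ¬ H.PendantVertex v).card)
    (u : H.V) (hu : u ∈ e)
    (Hr : HG)
    (hHr : Hr = ⟨H.V, H.fin, H.dec,
      (H.E \ H.E.filter fun f => f ≠ e ∧ (f ∩ e).Nonempty) ∪
        (H.E.filter fun f => f ≠ e ∧ (f ∩ e).Nonempty).image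
          fun f => insert u (f \ e)⟩)
    (hunif' : Hr.Uniform m) (hlin' : Hr.Linear)
    (hsimple : Hr.E.card = H.E.card) :
    lam1 m H < lam1 m Hr := by
  classical
  subst hHr
  set Adj : Finset (Finset H.V) := H.E.filter (fun f => f ≠ e ∧ (f ∩ e).Nonempty) with hAdjDef
  set rel : Finset H.V → Finset H.V := fun f => insert u (f \ e) with hrelDef
  set E' : Finset (Finset H.V) := (H.E \ Adj) ∪ Adj.image rel with hE'Def
  set HR : HG := ⟨H.V, H.fin, H.dec, E'⟩ with hHRDef
  have h3r : (3:ℝ) ≤ (m:ℝ) := by exact_mod_cast hm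
  have hm1 : (0:ℝ) < (m:ℝ) - 1 := by linarith
  set c : ℝ := ((m:ℝ) - 1)⁻¹ with hcDef
  have hc : 0 < c := inv_pos.2 hm1
  have hcne : c ≠ 0 := ne_of_gt hc
  have hene : e.Nonempty := by
    rw [← Finset.card_pos, hunif e he]; omega
  haveI hNE : Nonempty H.V := ⟨hene.choose⟩
  set AH : Matrix H.V H.V ℝ := H.adjMatrix m with hAHDef
  set AR : Matrix H.V H.V ℝ := HR.adjMatrix m with hARDef
  have hermH : AH.IsHermitian := HGaux.adj_isHermitian m H
  have hermR : AR.IsHermitian := HGaux.adj_isHermitian m HR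
  set lamH := SpecAux.maxEig hermH with hlamHDef
  set lamR := SpecAux.maxEig hermR with hlamRDef
  have hlamEqH : lam1 m H = lamH := SpecAux.sSup_eq_maxEig hermH
  have hlamEqR : lam1 m HR = lamR := SpecAux.sSup_eq_maxEig hermR
  -- Perron vector
  obtain ⟨X, hXpos, hXeig⟩ := HGaux.exists_perron_aux m hm H hconn
  have hXeig : AH.mulVec X = lamH • X := hXeig
  -- entry characterizations
  have hAHent : ∀ i j, AH i j = if i ≠ j ∧ ∃ g ∈ H.E, i ∈ g ∧ j ∈ g then c else 0 :=
    fun i j => rfl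
  have hARent : ∀ i j, AR i j = if i ≠ j ∧ ∃ g ∈ E', i ∈ g ∧ j ∈ g then c else 0 :=
    fun i j => rfl
  -- edge structure facts
  have hAdjE : Adj ⊆ H.E := Finset.filter_subset _ _
  have heE' : e ∈ E' := by
    refine Finset.mem_union_left _ ?_
    rw [Finset.mem_sdiff]
    refine ⟨he, ?_⟩
    rw [hAdjDef, Finset.mem_filter]
    rintro ⟨-, hne, -⟩; exact hne rfl
  have hvfspec : ∀ f ∈ Adj, ∃ a, f ∩ e = {a} := by
    intro f hf
    rw [hAdjDef, Finset.mem_filter] at hf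
    obtain ⟨hfE, hfne, hfint⟩ := hf
    exact Finset.card_eq_one.1 (le_antisymm (hlin f hfE e he hfne) (Finset.card_pos.2 hfint))
  set vf : Finset H.V → H.V := fun f => if h : ∃ a, f ∩ e = {a} then h.choose else u with hvfDef
  have hvfeq : ∀ f ∈ Adj, f ∩ e = {vf f} := by
    intro f hf
    have h := hvfspec f hf
    simp only [hvfDef, dif_pos h]
    exact h.choose_spec
  have hvfe : ∀ f ∈ Adj, vf f ∈ e := by
    intro f hf
    have h : vf f ∈ f ∩ e := by rw [hvfeq f hf]; exact Finset.mem_singleton_self _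
    exact (Finset.mem_inter.1 h).2
  have hfE : ∀ f ∈ Adj, f ∈ H.E := fun f hf => hAdjE hf
  have hdiffcard : ∀ f ∈ Adj, (f \ e).card = m - 1 := by
    intro f hf
    have h1 := Finset.card_sdiff_add_card_inter f e
    rw [hvfeq f hf, Finset.card_singleton, hunif f (hfE f hf)] at h1
    omega
  have hdiffne : ∀ f ∈ Adj, (f \ e).Nonempty := by
    intro f hf; rw [← Finset.card_pos, hdiffcard f hf]; omega
  have hunotdiff : ∀ f : Finset H.V, u ∉ f \ e := fun f h => (Finset.mem_sdiff.1 h).2 hu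
  -- injectivity and disjointness from simplicity
  have hsimple' : E'.card = H.E.card := hsimple
  have hcardAdj : Adj.card ≤ H.E.card := Finset.card_le_card hAdjE
  have hcard1 : (H.E \ Adj).card = H.E.card - Adj.card := Finset.card_sdiff_of_subset hAdjE
  have hcard2 : (Adj.image rel).card ≤ Adj.card := Finset.card_image_le
  have hcard3 : E'.card ≤ (H.E \ Adj).card + (Adj.image rel).card := by
    rw [hE'Def]; exact Finset.card_union_le _ _
  have hinjcard : (Adj.image rel).card = Adj.card := by omega
  have hinj : Set.InjOn rel Adj := Finset.card_image_iff.1 hinjcard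
  have hdisj : Disjoint (H.E \ Adj) (Adj.image rel) := by
    have h5 := Finset.card_union_add_card_inter (H.E \ Adj) (Adj.image rel)
    rw [← hE'Def] at h5
    have h6 : ((H.E \ Adj) ∩ (Adj.image rel)).card = 0 := by omega
    rw [Finset.card_eq_zero] at h6
    exact Finset.disjoint_iff_inter_eq_empty.2 h6
  -- swap sum helper
  have hswap_lemma : ∀ (w : H.V), w ∈ e → ∀ (F : H.V → ℝ),
      ∑ q ∈ e, F ((Equiv.swap u w) q) = ∑ q ∈ e, F q := by
    intro w hw F
    have himg : e.image (Equiv.swap u w) = e := by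
      apply Finset.eq_of_subset_of_card_le
      · intro q hq
        rw [Finset.mem_image] at hq
        obtain ⟨a, ha, rfl⟩ := hq
        by_cases h1 : a = u
        · subst h1; rw [Equiv.swap_apply_left]; exact hw
        · by_cases h2 : a = w
          · subst h2; rw [Equiv.swap_apply_right]; exact hu
          · rw [Equiv.swap_apply_of_ne_of_ne h1 h2]; exact ha
      · rw [Finset.card_image_of_injective _ (Equiv.injective _)]
    conv_rhs => rw [← himg]
    rw [Finset.sum_image (fun a _ b _ h => (Equiv.injective _) h)]
  -- quadratic forms
  set φ : (H.V → ℝ) → Finset H.V → ℝ :=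
    fun z g => (∑ i ∈ g, z i)^2 - ∑ i ∈ g, (z i)^2 with hφDef
  have hQH : ∀ z : H.V → ℝ, z ⬝ᵥ AH.mulVec z = c * ∑ g ∈ H.E, φ z g :=
    fun z => QF.quad_form H.E c hlin AH hAHent z
  have hQR : ∀ z : H.V → ℝ, z ⬝ᵥ AR.mulVec z = c * ∑ g ∈ E', φ z g :=
    fun z => QF.quad_form E' c hlin' AR hARent z
  -- contradiction setup
  rw [hlamEqH, hlamEqR]
  by_contra hcon
  push_neg at hcon
  have hle : lamR ≤ lamH := hcon
  have hXne : X ≠ (0 : H.V → ℝ) := by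
    intro h
    have h1 := hXpos (Classical.arbitrary H.V)
    rw [congrFun h _] at h1
    exact lt_irrefl 0 h1
  have hXXpos : 0 < X ⬝ᵥ X := SpecAux.dot_self_pos hXne
  have hXdot : X ⬝ᵥ AH.mulVec X = lamH * (X ⬝ᵥ X) := by
    rw [hXeig, dotProduct_smul, smul_eq_mul]
  -- main stage
  have stage : ∀ w ∈ e, (∀ q ∈ e, X q ≤ X w) →
      (∀ f ∈ Adj, X (vf f) = X w) ∧
        AR.mulVec (fun i => X ((Equiv.swap u w) i))
          = lamH • (fun i => X ((Equiv.swap u w) i)) := by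
    intro w hw hmax
    set Y : H.V → ℝ := fun i => X ((Equiv.swap u w) i) with hYDef
    have hYfix : ∀ i, i ∉ e → Y i = X i := by
      intro i hi
      simp only [hYDef]
      rw [Equiv.swap_apply_of_ne_of_ne (fun h => hi (by rw [h]; exact hu)) (fun h => hi (by rw [h]; exact hw))]
    have hYu : Y u = X w := by
      simp only [hYDef]; rw [Equiv.swap_apply_left]
    have hYY : Y ⬝ᵥ Y = X ⬝ᵥ X := by
      rw [dotProduct, dotProduct]
      simp only [hYDef]
      exact Equiv.sum_comp (Equiv.swap u w) (fun i => X i * X i)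
    have hφunrel : ∀ g ∈ H.E \ Adj, φ Y g = φ X g := by
      intro g hg
      rw [Finset.mem_sdiff] at hg
      obtain ⟨hgE, hgnA⟩ := hg
      have hclass : g = e ∨ g ∩ e = ∅ := by
        by_cases h1 : g = e
        · exact Or.inl h1
        · right
          by_contra h2
          apply hgnA
          rw [hAdjDef, Finset.mem_filter]
          exact ⟨hgE, h1, Finset.nonempty_iff_ne_empty.2 h2⟩
      rcases hclass with rfl | hdisj0
      · simp only [hφDef, hYDef]
        rw [hswap_lemma w hw X, hswap_lemma w hw (fun q => (X q)^2)]
      · have hYg : ∀ i ∈ g, Y i = X i := by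
          intro i hi
          apply hYfix
          intro hie
          have h3 : i ∈ g ∩ e := Finset.mem_inter.2 ⟨hi, hie⟩
          rw [hdisj0] at h3
          exact absurd h3 (Finset.notMem_empty i)
        simp only [hφDef]
        have e1 : ∑ i ∈ g, Y i = ∑ i ∈ g, X i := Finset.sum_congr rfl hYg
        have e2 : ∑ i ∈ g, (Y i)^2 = ∑ i ∈ g, (X i)^2 :=
          Finset.sum_congr rfl (fun i hi => by rw [hYg i hi])
        rw [e1, e2]
    have hrelsum : ∀ f ∈ Adj,
        φ Y (rel f) = φ X f + 2 * (X w - X (vf f)) * (∑ i ∈ f \ e, X i) := by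
      intro f hf
      have hYdiff : ∀ i ∈ f \ e, Y i = X i := fun i hi => hYfix i (Finset.mem_sdiff.1 hi).2
      have h1 : ∑ i ∈ rel f, Y i = X w + ∑ i ∈ f \ e, X i := by
        simp only [hrelDef]
        rw [Finset.sum_insert (hunotdiff f), hYu, Finset.sum_congr rfl hYdiff]
      have h2 : ∑ i ∈ rel f, (Y i)^2 = (X w)^2 + ∑ i ∈ f \ e, (X i)^2 := by
        simp only [hrelDef]
        rw [Finset.sum_insert (hunotdiff f), hYu,
          Finset.sum_congr rfl (fun i hi => by rw [hYdiff i hi])]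
      have h4 := Finset.sum_inter_add_sum_sdiff f e X
      rw [hvfeq f hf, Finset.sum_singleton] at h4
      have h4' := Finset.sum_inter_add_sum_sdiff f e (fun i => (X i)^2)
      rw [hvfeq f hf, Finset.sum_singleton] at h4'
      simp only [hφDef]
      rw [h1, h2, ← h4, ← h4']
      ring
    have hsplitH : ∑ g ∈ H.E, φ X g = ∑ g ∈ H.E \ Adj, φ X g + ∑ f ∈ Adj, φ X f :=
      (Finset.sum_sdiff hAdjE).symm
    have hsplitR : ∑ g ∈ E', φ Y g
        = ∑ g ∈ H.E \ Adj, φ Y g + ∑ f ∈ Adj, φ Y (rel f) := by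
      rw [hE'Def, Finset.sum_union hdisj,
        Finset.sum_image (fun a ha b hb h => hinj ha hb h)]
    have hΔ : Y ⬝ᵥ AR.mulVec Y
        = X ⬝ᵥ AH.mulVec X
          + c * ∑ f ∈ Adj, 2 * (X w - X (vf f)) * (∑ i ∈ f \ e, X i) := by
      rw [hQR Y, hQH X, hsplitR, hsplitH, Finset.sum_congr rfl hφunrel,
        Finset.sum_congr rfl hrelsum, Finset.sum_add_distrib]
      ring
    have hterm_nonneg : ∀ f ∈ Adj, 0 ≤ 2 * (X w - X (vf f)) * (∑ i ∈ f \ e, X i) := by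
      intro f hf
      have h1 : X (vf f) ≤ X w := hmax _ (hvfe f hf)
      have h2 : 0 ≤ ∑ i ∈ f \ e, X i := Finset.sum_nonneg fun i _ => (hXpos i).le
      have h3 : (0:ℝ) ≤ 2 * (X w - X (vf f)) := by linarith
      exact mul_nonneg h3 h2
    have hsum_nonneg : 0 ≤ ∑ f ∈ Adj, 2 * (X w - X (vf f)) * (∑ i ∈ f \ e, X i) :=
      Finset.sum_nonneg hterm_nonneg
    have hup : Y ⬝ᵥ AR.mulVec Y ≤ lamR * (Y ⬝ᵥ Y) := SpecAux.quad_le_max hermR Y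
    have hchain : lamH * (X ⬝ᵥ X)
        + c * ∑ f ∈ Adj, 2 * (X w - X (vf f)) * (∑ i ∈ f \ e, X i)
        ≤ lamH * (X ⬝ᵥ X) := by
      calc lamH * (X ⬝ᵥ X)
            + c * ∑ f ∈ Adj, 2 * (X w - X (vf f)) * (∑ i ∈ f \ e, X i)
          = Y ⬝ᵥ AR.mulVec Y := by rw [hΔ, hXdot]
        _ ≤ lamR * (Y ⬝ᵥ Y) := hup
        _ = lamR * (X ⬝ᵥ X) := by rw [hYY]
        _ ≤ lamH * (X ⬝ᵥ X) := mul_le_mul_of_nonneg_right hle (SpecAux.dot_self_nonneg X)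
    have hSig0 : ∑ f ∈ Adj, 2 * (X w - X (vf f)) * (∑ i ∈ f \ e, X i) = 0 := by
      nlinarith [hchain, hsum_nonneg, hc]
    have hXvf : ∀ f ∈ Adj, X (vf f) = X w := by
      intro f hf
      have h1 := (Finset.sum_eq_zero_iff_of_nonneg hterm_nonneg).1 hSig0 f hf
      have hSpos : 0 < ∑ i ∈ f \ e, X i :=
        Finset.sum_pos (fun i _ => hXpos i) (hdiffne f hf)
      rcases mul_eq_zero.1 h1 with h | h
      · linarith [h]
      · linarith [h, hSpos]
    have h1 : Y ⬝ᵥ AR.mulVec Y = lamH * (Y ⬝ᵥ Y) := by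
      rw [hΔ, hXdot, hSig0, hYY]; ring
    have hYYpos : 0 < Y ⬝ᵥ Y := by rw [hYY]; exact hXXpos
    have hlamHR : lamH = lamR := by
      rw [h1] at hup
      have h2 : lamH ≤ lamR := le_of_mul_le_mul_right hup hYYpos
      linarith
    have heigY : AR.mulVec Y = lamH • Y := by
      rw [hlamHR]
      apply SpecAux.eq_smul_of_quad_eq hermR
      rw [h1, hlamHR]
    exact ⟨hXvf, heigY⟩
  -- find a non-pendant vertex v ≠ u of e
  obtain ⟨v, hv1, hvu⟩ := Finset.exists_mem_ne
    (by omega : 1 < (e.filter fun z => ¬ H.PendantVertex z).card) u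
  rw [Finset.mem_filter] at hv1
  obtain ⟨hve, hvnp⟩ := hv1
  -- v has an edge other than e
  have hf0 : ∃ f0 ∈ Adj, vf f0 = v := by
    have hdeg : 1 < (H.E.filter fun g => v ∈ g).card := by
      have h1 : e ∈ H.E.filter fun g => v ∈ g := Finset.mem_filter.2 ⟨he, hve⟩
      have h2 : (H.E.filter fun g => v ∈ g).card ≠ 1 := hvnp
      have h3 : 0 < (H.E.filter fun g => v ∈ g).card := Finset.card_pos.2 ⟨e, h1⟩
      omega
    obtain ⟨f0, hf01, hf02⟩ := Finset.exists_mem_ne hdeg e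
    rw [Finset.mem_filter] at hf01
    have hf0Adj : f0 ∈ Adj := by
      rw [hAdjDef, Finset.mem_filter]
      exact ⟨hf01.1, hf02, ⟨v, Finset.mem_inter.2 ⟨hf01.2, hve⟩⟩⟩
    refine ⟨f0, hf0Adj, ?_⟩
    have h5 : v ∈ f0 ∩ e := Finset.mem_inter.2 ⟨hf01.2, hve⟩
    rw [hvfeq f0 hf0Adj, Finset.mem_singleton] at h5
    exact h5.symm
  obtain ⟨f0, hf0A, hf0v⟩ := hf0
  -- first stage application: argmax
  obtain ⟨w0, hw0e, hw0max⟩ := Finset.exists_max_image e X hene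
  obtain ⟨hst1, -⟩ := stage w0 hw0e hw0max
  have hXvmax : ∀ q ∈ e, X q ≤ X v := by
    intro q hq
    have h6 : X v = X w0 := by rw [← hf0v]; exact hst1 f0 hf0A
    rw [h6]; exact hw0max q hq
  obtain ⟨-, heigY⟩ := stage v hve hXvmax
  set Y : H.V → ℝ := fun i => X ((Equiv.swap u v) i) with hYDef
  -- adjacency row characterization in HR for p ∈ e, p ≠ u
  have hARrow : ∀ p, p ∈ e → p ≠ u → ∀ j, AR p j = if j ∈ e ∧ j ≠ p then c else 0 := by
    intro p hp hpu j
    rw [hARent p j]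
    by_cases h1 : j ∈ e ∧ j ≠ p
    · rw [if_pos h1, if_pos]
      exact ⟨fun h => h1.2 h.symm, e, heE', hp, h1.1⟩
    · rw [if_neg h1, if_neg]
      rintro ⟨hpj, g, hgE', hpg, hjg⟩
      apply h1
      refine ⟨?_, fun h => hpj h.symm⟩
      rw [hE'Def, Finset.mem_union] at hgE'
      rcases hgE' with hg1 | hg2
      · rw [Finset.mem_sdiff] at hg1
        by_cases hge : g = e
        · subst hge; exact hjg
        · exfalso
          exact hg1.2 (Finset.mem_filter.2
            ⟨hg1.1, hge, ⟨p, Finset.mem_inter.2 ⟨hpg, hp⟩⟩⟩)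
      · exfalso
        rw [Finset.mem_image] at hg2
        obtain ⟨f, hfA, rfl⟩ := hg2
        simp only [hrelDef] at hpg
        rw [Finset.mem_insert] at hpg
        rcases hpg with rfl | hpg
        · exact hpu rfl
        · exact (Finset.mem_sdiff.1 hpg).2 hp
  have hARrowsum : ∀ p, p ∈ e → p ≠ u →
      (AR.mulVec Y) p = c * ∑ q ∈ e.erase p, Y q := by
    intro p hp hpu
    have h1 : ∀ j, AR p j * Y j = if j ∈ e.erase p then c * Y j else 0 := by
      intro j
      rw [hARrow p hp hpu j]
      by_cases h2 : j ∈ e ∧ j ≠ p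
      · rw [if_pos h2, if_pos (Finset.mem_erase.2 ⟨h2.2, h2.1⟩)]
      · rw [if_neg h2,
          if_neg (fun h => h2 ⟨(Finset.mem_erase.1 h).2, (Finset.mem_erase.1 h).1⟩),
          zero_mul]
    have h0 : (AR.mulVec Y) p = ∑ j, AR p j * Y j := rfl
    rw [h0, Finset.sum_congr rfl (fun j _ => h1 j), Finset.sum_ite_mem,
      Finset.univ_inter, Finset.mul_sum]
  -- key equation for all p ∈ e, p ≠ v
  have hkey : ∀ p ∈ e, p ≠ v → lamH * X p = c * ∑ q ∈ e.erase p, X q := by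
    intro p hp hpv
    have hq1 : (Equiv.swap u v) p ∈ e := by
      by_cases hpu : p = u
      · subst hpu; rw [Equiv.swap_apply_left]; exact hve
      · rw [Equiv.swap_apply_of_ne_of_ne hpu hpv]; exact hp
    have hq2 : (Equiv.swap u v) p ≠ u := by
      by_cases hpu : p = u
      · subst hpu; rw [Equiv.swap_apply_left]; exact hvu
      · rw [Equiv.swap_apply_of_ne_of_ne hpu hpv]; exact hpu
    have h3 := congrFun heigY ((Equiv.swap u v) p)
    rw [hARrowsum _ hq1 hq2, Pi.smul_apply, smul_eq_mul] at h3
    have h4 : Y ((Equiv.swap u v) p) = X p := by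
      simp only [hYDef]; rw [Equiv.swap_apply_self]
    have h5 := Finset.sum_erase_add e Y hq1
    have h6 : ∑ q ∈ e, Y q = ∑ q ∈ e, X q := by
      simp only [hYDef]; exact hswap_lemma v hve X
    have h7 := Finset.sum_erase_add e X hp
    rw [h4] at h3 h5
    -- h3 : c * ∑_{e.erase (σ p)} Y = lamH * X p
    -- h5 : ∑_{e.erase (σ p)} Y + X p = ∑_e Y = ∑_e X
    -- h7 : ∑_{e.erase p} X + X p = ∑_e X
    rw [h6] at h5
    have h8 : ∑ q ∈ e.erase ((Equiv.swap u v) p), Y q = ∑ q ∈ e.erase p, X q := by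
      linarith
    rw [h8] at h3
    linarith [h3]
  -- every p ∈ e with p ≠ v is a pendant vertex
  have hpend : ∀ p ∈ e, p ≠ v → H.PendantVertex p := by
    intro p hp hpv
    have h1 : ∑ j, AH p j * X j = lamH * X p := by
      have h1' := congrFun hXeig p
      rw [Pi.smul_apply, smul_eq_mul] at h1'
      exact h1'
    have h2 : ∑ j ∈ e.erase p, AH p j * X j = c * ∑ q ∈ e.erase p, X q := by
      rw [Finset.mul_sum]
      refine Finset.sum_congr rfl fun j hj => ?_
      rw [Finset.mem_erase] at hj
      rw [hAHent, if_pos ⟨fun h => hj.1 h.symm, e, he, hp, hj.2⟩]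
    have h4 := Finset.sum_sdiff (Finset.subset_univ (e.erase p))
      (f := fun j => AH p j * X j)
    have h3 : ∑ j ∈ Finset.univ \ e.erase p, AH p j * X j = 0 := by
      have h9 := hkey p hp hpv
      rw [h2] at h4
      rw [h1] at h4
      linarith
    have h5 : ∀ j, j ∉ e → AH p j = 0 := by
      intro j hj
      have hj2 : j ∈ Finset.univ \ e.erase p := by
        rw [Finset.mem_sdiff]
        exact ⟨Finset.mem_univ j, fun h => hj (Finset.mem_erase.1 h).2⟩
      have h6 := (Finset.sum_eq_zero_iff_of_nonneg
        (fun j _ => mul_nonneg (HGaux.adj_nonneg m hm H p j) (hXpos j).le)).1 h3 j hj2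
      rcases mul_eq_zero.1 h6 with h | h
      · exact h
      · exact absurd h (ne_of_gt (hXpos j))
    show H.degree p = 1
    have h7 : H.E.filter (fun g => p ∈ g) = {e} := by
      apply Finset.eq_singleton_iff_unique_mem.2
      refine ⟨Finset.mem_filter.2 ⟨he, hp⟩, ?_⟩
      intro g hg
      rw [Finset.mem_filter] at hg
      by_contra hge
      have h8 : (g ∩ e).card ≤ 1 := hlin g hg.1 e he hge
      have h9 : 0 < (g \ e).card := by
        have h10 := Finset.card_sdiff_add_card_inter g e
        have h11 := hunif g hg.1
        omega
      obtain ⟨j, hj⟩ := Finset.card_pos.1 h9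
      rw [Finset.mem_sdiff] at hj
      have h12 := h5 j hj.2
      rw [hAHent, if_pos ⟨fun h => hj.2 (h ▸ hp), g, hg.1, hg.2, hj.1⟩] at h12
      exact hcne h12
    show (H.E.filter fun g => p ∈ g).card = 1
    rw [h7, Finset.card_singleton]
  -- contradiction with non-pendant count
  have hsub : e.filter (fun z => ¬ H.PendantVertex z) ⊆ {v} := by
    intro p hp
    rw [Finset.mem_filter] at hp
    rw [Finset.mem_singleton]
    by_contra hpv
    exact hp.2 (hpend p hp.1 hpv)
  have hcard := Finset.card_le_card hsub
  rw [Finset.card_singleton] at hcard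
  omega
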